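/- Let (C, P) be a Dorroh pair of coalgebras over a field k. Then the comultiplication Δ on C⋉_d P defined by Δ(c,p) = Σ (c₁,0)⊗(c₂,0) + Σ (p₍₋₁₎,0)⊗(0,p₍₀₎) + Σ (0,p₍₀₎)⊗(p₍₁₎,0) + Σ (0,p₁)⊗(0,p₂) is coassociative: (Δ⊗id)Δ = (id⊗Δ)Δ. -/

import Mathlib

open TensorProduct

section

variable {k : Type} [Field k] {C P : Type}
  [AddCommGroup C] [Module k C] [AddCommGroup P] [Module k P]

/-- Coassociativity of a (not necessarily counital) comultiplication. -/
def Coassoc (Δ : C →ₗ[k] C ⊗[k] C) : Prop :=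
  (TensorProduct.assoc k C C C).toLinearMap ∘ₗ Δ.rTensor C ∘ₗ Δ = Δ.lTensor C ∘ₗ Δ

/-- `(C, P)` together with the comultiplications `ΔC`, `ΔP` and the coactions
`ρl : P → C ⊗ P`, `ρr : P → P ⊗ C` is a Dorroh pair of coalgebras. -/
def IsDorrohPairC (ΔC : C →ₗ[k] C ⊗[k] C) (ΔP : P →ₗ[k] P ⊗[k] P)
    (ρl : P →ₗ[k] C ⊗[k] P) (ρr : P →ₗ[k] P ⊗[k] C) : Prop :=
  Coassoc ΔC ∧ Coassoc ΔP ∧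
  ((TensorProduct.assoc k C C P).toLinearMap ∘ₗ ΔC.rTensor P ∘ₗ ρl = ρl.lTensor C ∘ₗ ρl) ∧
  (ΔC.lTensor P ∘ₗ ρr = (TensorProduct.assoc k P C C).toLinearMap ∘ₗ ρr.rTensor C ∘ₗ ρr) ∧
  (ρr.lTensor C ∘ₗ ρl = (TensorProduct.assoc k C P C).toLinearMap ∘ₗ ρl.rTensor C ∘ₗ ρr) ∧
  (ρr.lTensor P ∘ₗ ΔP = (TensorProduct.assoc k P P C).toLinearMap ∘ₗ ΔP.rTensor C ∘ₗ ρr) ∧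
  ((TensorProduct.assoc k C P P).toLinearMap ∘ₗ ρl.rTensor P ∘ₗ ΔP = ΔP.lTensor C ∘ₗ ρl) ∧
  ((TensorProduct.assoc k P C P).toLinearMap ∘ₗ ρr.rTensor P ∘ₗ ΔP = ρl.lTensor P ∘ₗ ΔP)

/-- The comultiplication of the Dorroh extension `C ⋉_d P`,
`Δ(c,p) = Σ (c₁,0)⊗(c₂,0) + Σ (p₍₋₁₎,0)⊗(0,p₍₀₎) + Σ (0,p₍₀₎)⊗(p₍₁₎,0) + Σ (0,p₁)⊗(0,p₂)`. -/
noncomputable def dorrohComul (ΔC : C →ₗ[k] C ⊗[k] C) (ΔP : P →ₗ[k] P ⊗[k] P)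
    (ρl : P →ₗ[k] C ⊗[k] P) (ρr : P →ₗ[k] P ⊗[k] C) :
    (C × P) →ₗ[k] (C × P) ⊗[k] (C × P) :=
  TensorProduct.map (LinearMap.inl k C P) (LinearMap.inl k C P) ∘ₗ ΔC ∘ₗ LinearMap.fst k C P
  + TensorProduct.map (LinearMap.inl k C P) (LinearMap.inr k C P) ∘ₗ ρl ∘ₗ LinearMap.snd k C P
  + TensorProduct.map (LinearMap.inr k C P) (LinearMap.inl k C P) ∘ₗ ρr ∘ₗ LinearMap.snd k C P
  + TensorProduct.map (LinearMap.inr k C P) (LinearMap.inr k C P) ∘ₗ ΔP ∘ₗ LinearMap.snd k C P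


section Helpers

variable {k : Type} [Field k] {A B W X X' Y Y' : Type}
  [AddCommGroup A] [Module k A] [AddCommGroup B] [Module k B]
  [AddCommGroup W] [Module k W]
  [AddCommGroup X] [Module k X] [AddCommGroup X'] [Module k X']
  [AddCommGroup Y] [Module k Y] [AddCommGroup Y'] [Module k Y']

lemma rT_map' (f : X →ₗ[k] X') (a : A →ₗ[k] X) (b : B →ₗ[k] Y) (g : W →ₗ[k] A ⊗[k] B) :
    f.rTensor Y ∘ₗ (TensorProduct.map a b ∘ₗ g) = TensorProduct.map (f ∘ₗ a) b ∘ₗ g := by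
  rw [← LinearMap.comp_assoc, LinearMap.rTensor, ← TensorProduct.map_comp, LinearMap.id_comp]

lemma lT_map' (f : Y →ₗ[k] Y') (a : A →ₗ[k] X) (b : B →ₗ[k] Y) (g : W →ₗ[k] A ⊗[k] B) :
    f.lTensor X ∘ₗ (TensorProduct.map a b ∘ₗ g) = TensorProduct.map a (f ∘ₗ b) ∘ₗ g := by
  rw [← LinearMap.comp_assoc, LinearMap.lTensor, ← TensorProduct.map_comp, LinearMap.id_comp]

lemma map_split_left' (u : X →ₗ[k] X') (D : A →ₗ[k] X) (b : B →ₗ[k] Y) (g : W →ₗ[k] A ⊗[k] B) :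
    TensorProduct.map (u ∘ₗ D) b ∘ₗ g = TensorProduct.map u b ∘ₗ (D.rTensor B ∘ₗ g) := by
  rw [← LinearMap.comp_assoc, LinearMap.rTensor, ← TensorProduct.map_comp, LinearMap.comp_id]

lemma map_split_right' (a : A →ₗ[k] X) (u : Y →ₗ[k] Y') (D : B →ₗ[k] Y) (g : W →ₗ[k] A ⊗[k] B) :
    TensorProduct.map a (u ∘ₗ D) ∘ₗ g = TensorProduct.map a u ∘ₗ (D.lTensor A ∘ₗ g) := by
  rw [← LinearMap.comp_assoc, LinearMap.lTensor, ← TensorProduct.map_comp, LinearMap.comp_id]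

variable {M N Q M' N' Q' : Type}
  [AddCommGroup M] [Module k M] [AddCommGroup N] [Module k N] [AddCommGroup Q] [Module k Q]
  [AddCommGroup M'] [Module k M'] [AddCommGroup N'] [Module k N'] [AddCommGroup Q'] [Module k Q']

lemma assoc_nat' (f : M →ₗ[k] M') (g : N →ₗ[k] N') (h : Q →ₗ[k] Q')
    (e : W →ₗ[k] (M ⊗[k] N) ⊗[k] Q) :
    (TensorProduct.assoc k M' N' Q').toLinearMap ∘ₗ
      (TensorProduct.map (TensorProduct.map f g) h ∘ₗ e) =
      TensorProduct.map f (TensorProduct.map g h) ∘ₗ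
      ((TensorProduct.assoc k M N Q).toLinearMap ∘ₗ e) := by
  rw [← LinearMap.comp_assoc, ← TensorProduct.map_map_comp_assoc_eq, LinearMap.comp_assoc]

end Helpers

/-- **Lemma 2.3.** The comultiplication of the Dorroh extension `C ⋉_d P` of a Dorroh pair
of coalgebras `(C, P)` is coassociative. -/
theorem dorrohComul_coassoc (ΔC : C →ₗ[k] C ⊗[k] C) (ΔP : P →ₗ[k] P ⊗[k] P)
    (ρl : P →ₗ[k] C ⊗[k] P) (ρr : P →ₗ[k] P ⊗[k] C)
    (h : IsDorrohPairC ΔC ΔP ρl ρr) :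
    Coassoc (dorrohComul ΔC ΔP ρl ρr) := by
  obtain ⟨hC, hP, h1, h2, h3, h4, h5, h6⟩ := h
  unfold Coassoc at hC hP
  let i := LinearMap.inl k C P
  let j := LinearMap.inr k C P
  set D := dorrohComul ΔC ΔP ρl ρr with hD
  have hDi : D ∘ₗ i = TensorProduct.map i i ∘ₗ ΔC := by
    simp [hD, dorrohComul, LinearMap.add_comp, LinearMap.comp_assoc, i]
  have hDj : D ∘ₗ j = TensorProduct.map i j ∘ₗ ρl + TensorProduct.map j i ∘ₗ ρr
      + TensorProduct.map j j ∘ₗ ΔP := by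
    simp [hD, dorrohComul, LinearMap.add_comp, LinearMap.comp_assoc, i, j]
  unfold Coassoc
  apply LinearMap.prod_ext
  · show ((TensorProduct.assoc k (C × P) (C × P) (C × P)).toLinearMap ∘ₗ LinearMap.rTensor (C × P) D ∘ₗ D) ∘ₗ i = (LinearMap.lTensor (C × P) D ∘ₗ D) ∘ₗ i
    simp only [LinearMap.comp_assoc, hDi, rT_map', lT_map', map_split_left',
      map_split_right', assoc_nat', hC]
  · show ((TensorProduct.assoc k (C × P) (C × P) (C × P)).toLinearMap ∘ₗ LinearMap.rTensor (C × P) D ∘ₗ D) ∘ₗ j = (LinearMap.lTensor (C × P) D ∘ₗ D) ∘ₗ j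
    simp only [LinearMap.comp_assoc, hDj, LinearMap.comp_add, LinearMap.add_comp,
      TensorProduct.map_add_left, TensorProduct.map_add_right,
      rT_map', lT_map', map_split_left', map_split_right', assoc_nat',
      hDi, hC, hP, h1, ← h2, ← h3, ← h4, h5, h6]
    abel


end
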